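/- Let T be a continuous time-to-event random variable with proportional hazard λ_i(t) = λ₀(t)·exp(x_i'β), where λ₀ is a nonnegative integrable baseline hazard. Then the grouped-time conditional failure probability over interval [a_{τ-1}, a_τ) satisfies P(T ∈ [a_{τ-1}, a_τ) | T ≥ a_{τ-1}) = 1 - exp(-exp(x_i'β + ψ_τ)), where ψ_τ = log ∫_{a_{τ-1}}^{a_τ} λ₀(u) du (assuming this integral is positive and finite). -/

import Mathlib

open MeasureTheory ProbabilityTheory

/-- Prentice–Gloeckler (1978): grouping a continuous-time proportional hazards model with
hazard `λ₀(t)·exp(x'β)` yields a cloglog model: the conditional failure probability over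
`[a_{τ-1}, a_τ)` is `1 - exp(-exp(x'β + ψ_τ))` with `ψ_τ = log ∫_{a_{τ-1}}^{a_τ} λ₀`. -/
theorem prentice_gloeckler_cloglog
    {Ω : Type*} [MeasurableSpace Ω] (μ : Measure Ω) [IsProbabilityMeasure μ]
    (T : Ω → ℝ) (hT : Measurable T)
    (lam0 : ℝ → ℝ) (hlam0 : ∀ t, 0 ≤ lam0 t)
    (hint : ∀ s t : ℝ, IntervalIntegrable lam0 volume s t)
    {n : ℕ} (x β : Fin n → ℝ)
    (hS : ∀ t : ℝ, 0 ≤ t →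
      (μ {ω | t ≤ T ω}).toReal
        = Real.exp (-(Real.exp (∑ i, x i * β i)) * ∫ u in (0:ℝ)..t, lam0 u))
    (a0 a1 : ℝ) (h0 : 0 ≤ a0) (h01 : a0 ≤ a1)
    (ψ : ℝ) (hψ : ψ = Real.log (∫ u in a0..a1, lam0 u))
    (hpos : 0 < ∫ u in a0..a1, lam0 u) :
    (μ[|{ω | a0 ≤ T ω}] {ω | T ω ∈ Set.Ico a0 a1}).toReal
      = 1 - Real.exp (-Real.exp ((∑ i, x i * β i) + ψ)) := by
  set c := Real.exp (∑ i, x i * β i) with hc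
  set I0 := ∫ u in (0:ℝ)..a0, lam0 u with hI0
  set I1 := ∫ u in (0:ℝ)..a1, lam0 u with hI1
  set I := ∫ u in a0..a1, lam0 u with hI
  have hadd : I0 + I = I1 :=
    intervalIntegral.integral_add_adjacent_intervals (hint 0 a0) (hint a0 a1)
  have hs0 : MeasurableSet {ω | a0 ≤ T ω} := hT measurableSet_Ici
  have hs1 : MeasurableSet {ω | a1 ≤ T ω} := hT measurableSet_Ici
  have hS0 : (μ {ω | a0 ≤ T ω}).toReal = Real.exp (-c * I0) := hS a0 h0
  have hS1 : (μ {ω | a1 ≤ T ω}).toReal = Real.exp (-c * I1) := hS a1 (h0.trans h01)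
  have hfin0 : μ {ω | a0 ≤ T ω} ≠ ⊤ := measure_ne_top μ _
  have hfin1 : μ {ω | a1 ≤ T ω} ≠ ⊤ := measure_ne_top μ _
  have hne0 : μ {ω | a0 ≤ T ω} ≠ 0 := by
    intro h
    have := hS0
    rw [h] at this
    simp at this
    exact absurd this.symm (Real.exp_ne_zero _)
  have hsub : {ω | a1 ≤ T ω} ⊆ {ω | a0 ≤ T ω} := fun ω h => le_trans h01 h
  have hinter : {ω | a0 ≤ T ω} ∩ {ω | T ω ∈ Set.Ico a0 a1}
      = {ω | a0 ≤ T ω} \ {ω | a1 ≤ T ω} := by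
    ext ω
    simp only [Set.mem_inter_iff, Set.mem_setOf_eq, Set.mem_Ico, Set.mem_diff, not_le]
    tauto
  have hμIco : μ ({ω | a0 ≤ T ω} \ {ω | a1 ≤ T ω})
      = μ {ω | a0 ≤ T ω} - μ {ω | a1 ≤ T ω} :=
    measure_diff hsub hs1.nullMeasurableSet hfin1
  rw [ProbabilityTheory.cond_apply hs0, hinter, hμIco,
    ENNReal.toReal_mul, ENNReal.toReal_inv,
    ENNReal.toReal_sub_of_le (measure_mono hsub) hfin0, hS0, hS1]
  have hcI : Real.exp ((∑ i, x i * β i) + ψ) = c * I := by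
    rw [Real.exp_add, hψ, Real.exp_log hpos, hc]
  rw [hcI]
  have hexp0 : Real.exp (-c * I0) ≠ 0 := Real.exp_ne_zero _
  field_simp
  rw [← hadd, mul_comm, mul_sub, mul_one, ← Real.exp_add]
  ring_nf
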